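/- Suppose δ, μ, τ are positive reals and 0 < R0 < 1. Then for every real ω, one has ω⁴ + (μ² + δ²)ω² + δ²μ² − (R0·δμ)² > 0; consequently F has no purely imaginary root, i.e., F(iω) ≠ 0 for every real ω. -/

import Mathlib

/-- If 0 < R0 < 1, then ω⁴ + (μ²+δ²)ω² + δ²μ² − (R0 δ μ)² > 0
for every real ω, and consequently F has no purely imaginary root. -/
theorem no_purely_imaginary_characteristic_root
    (δ μ τ R0 : ℝ) (hδ : 0 < δ) (hμ : 0 < μ) (hτ : 0 < τ)
    (hR0 : 0 < R0) (hR0lt : R0 < 1) :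
    (∀ ω : ℝ,
      0 < ω ^ 4 + (μ ^ 2 + δ ^ 2) * ω ^ 2 + δ ^ 2 * μ ^ 2 - (R0 * δ * μ) ^ 2) ∧
    (∀ ω : ℝ,
      ((ω : ℂ) * Complex.I) ^ 2 + ((δ : ℂ) + (μ : ℂ)) * ((ω : ℂ) * Complex.I)
        + (δ : ℂ) * (μ : ℂ)
        - (R0 : ℂ) * (δ : ℂ) * (μ : ℂ)
          * Complex.exp (-((ω : ℂ) * Complex.I) * (τ : ℂ)) ≠ 0) := by
  have key : ∀ ω : ℝ,
      0 < ω ^ 4 + (μ ^ 2 + δ ^ 2) * ω ^ 2 + δ ^ 2 * μ ^ 2 - (R0 * δ * μ) ^ 2 := by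
    intro ω
    have hp : 0 < (1 - R0) * (1 + R0) * (δ * μ) ^ 2 :=
      mul_pos (mul_pos (by linarith) (by linarith)) (pow_pos (mul_pos hδ hμ) 2)
    nlinarith [hp, sq_nonneg ω, sq_nonneg (ω ^ 2)]
  refine ⟨key, fun ω h => ?_⟩
  have h1 := key ω
  have heq : ((ω : ℂ) * Complex.I) ^ 2 + ((δ : ℂ) + (μ : ℂ)) * ((ω : ℂ) * Complex.I)
      + (δ : ℂ) * (μ : ℂ)
      = (R0 : ℂ) * (δ : ℂ) * (μ : ℂ) * Complex.exp (-((ω : ℂ) * Complex.I) * (τ : ℂ)) := by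
    linear_combination h
  have habs := congrArg norm heq
  rw [norm_mul, Complex.norm_exp] at habs
  have hre : (-((ω : ℂ) * Complex.I) * (τ : ℂ)).re = 0 := by
    simp [Complex.mul_re]
  rw [hre, Real.exp_zero, mul_one] at habs
  have hL : ‖((ω : ℂ) * Complex.I) ^ 2
      + ((δ : ℂ) + (μ : ℂ)) * ((ω : ℂ) * Complex.I) + (δ : ℂ) * (μ : ℂ)‖ ^ 2
      = ω ^ 4 + (μ ^ 2 + δ ^ 2) * ω ^ 2 + δ ^ 2 * μ ^ 2 := by
    rw [Complex.sq_norm, Complex.normSq_apply]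
    simp [mul_pow, Complex.I_sq, Complex.mul_re, Complex.mul_im, ← Complex.ofReal_pow]
    ring
  have hR : ‖(R0 : ℂ) * (δ : ℂ) * (μ : ℂ)‖ ^ 2 = (R0 * δ * μ) ^ 2 := by
    rw [show (R0 : ℂ) * (δ : ℂ) * (μ : ℂ) = ((R0 * δ * μ : ℝ) : ℂ) by push_cast; ring,
      Complex.norm_real, Real.norm_eq_abs, sq_abs]
  have : ω ^ 4 + (μ ^ 2 + δ ^ 2) * ω ^ 2 + δ ^ 2 * μ ^ 2 = (R0 * δ * μ) ^ 2 := by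
    rw [← hL, ← hR, habs]
  linarith
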